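/- Let p_1, …, p_m in [0,1], nonnegative reals R̂_1, …, R̂_m, λ in [0,1]^m, and q in (0,1). Then the size of the pruned selection set equals its threshold: |S(λ)| = r*(λ). -/
import Mathlib


/-- The pruning threshold `r*(λ) = max{r ∈ {0,…,m} : #{j : p_j ≤ q·R̂_j/m and λ_j·R̂_j ≤ r} ≥ r}`. -/
noncomputable def prunedThreshold (m : ℕ) (q : ℝ) (p R lam : Fin m → ℝ) : ℕ :=
  Nat.findGreatest
    (fun r => r ≤ Set.ncard {j : Fin m | p j ≤ q * R j / m ∧ lam j * R j ≤ (r : ℝ)}) m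

/-- The pruned selection set `S(λ) = {j : p_j ≤ q·R̂_j/m and λ_j·R̂_j ≤ r*(λ)}`. -/
noncomputable def prunedSet (m : ℕ) (q : ℝ) (p R lam : Fin m → ℝ) : Set (Fin m) :=
  {j : Fin m | p j ≤ q * R j / m ∧ lam j * R j ≤ (prunedThreshold m q p R lam : ℝ)}

/-- The BH index `r*_BH = max{r ∈ {0,…,m} : #{j : p_j ≤ q·r/m} ≥ r}`. -/
noncomputable def bhThreshold (m : ℕ) (q : ℝ) (p : Fin m → ℝ) : ℕ :=
  Nat.findGreatest (fun r => r ≤ Set.ncard {j : Fin m | p j ≤ q * (r : ℝ) / m}) m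

/-- The BH selection set `S_BH = {j : p_j ≤ q·r*_BH/m}`. -/
noncomputable def bhSet (m : ℕ) (q : ℝ) (p : Fin m → ℝ) : Set (Fin m) :=
  {j : Fin m | p j ≤ q * (bhThreshold m q p : ℝ) / m}

/-- The size of the pruned selection set equals its threshold:
`|S(λ)| = r*(λ)`. -/
theorem pruned_card_eq_threshold
    (m : ℕ) (q : ℝ) (hq : q ∈ Set.Ioo (0 : ℝ) 1)
    (p : Fin m → ℝ) (hp : ∀ j, p j ∈ Set.Icc (0 : ℝ) 1)
    (R : Fin m → ℝ) (hR : ∀ j, 0 ≤ R j)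
    (lam : Fin m → ℝ) (hlam : ∀ j, lam j ∈ Set.Icc (0 : ℝ) 1) :
    Set.ncard (prunedSet m q p R lam) = prunedThreshold m q p R lam := by
    classical
  set r := prunedThreshold m q p R lam with hrdef
  set c := Set.ncard (prunedSet m q p R lam) with hcdef
  have hP : r ≤ Set.ncard {j : Fin m | p j ≤ q * R j / m ∧ lam j * R j ≤ (r : ℝ)} := by
    rcases Nat.eq_zero_or_pos r with h0 | hpos
    · simp [h0]
    · exact Nat.findGreatest_of_ne_zero
        (P := fun r => r ≤ Set.ncard
          {j : Fin m | p j ≤ q * R j / m ∧ lam j * R j ≤ (r : ℝ)}) (n := m)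
        hrdef.symm hpos.ne'
  have hrc : r ≤ c := by
    simpa [hcdef, prunedSet, hrdef] using hP
  have hsub : prunedSet m q p R lam ⊆
      {j : Fin m | p j ≤ q * R j / m ∧ lam j * R j ≤ (c : ℝ)} := by
    intro j hj
    exact ⟨hj.1, hj.2.trans (by exact_mod_cast hrc)⟩
  have hPc : c ≤ Set.ncard {j : Fin m | p j ≤ q * R j / m ∧ lam j * R j ≤ (c : ℝ)} :=
    hcdef ▸ Set.ncard_le_ncard hsub (Set.toFinite _)
  have hcm : c ≤ m := by
    have := Set.ncard_le_ncard (Set.subset_univ (prunedSet m q p R lam)) (Set.toFinite _)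
    simpa [Set.ncard_univ] using this
  have hcr : c ≤ r := Nat.le_findGreatest hcm hPc
  exact le_antisymm hcr hrc
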